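/- For every n ≥ 5, the cycle graph C_n on n vertices is distance critical. -/

import Mathlib

/-- A graph is *distance critical* if for every vertex `v` there is a pair of vertices of
`G − v` whose distance in `G − v` differs from their distance in `G`
(distances are `ℕ∞`-valued, `⊤` when there is no connecting path). -/
def IsDistanceCritical {V : Type*} (G : SimpleGraph V) : Prop :=
  ∀ v : V, ∃ x y : ({v}ᶜ : Set V),
    (G.induce ({v}ᶜ : Set V)).edist x y ≠ G.edist (x : V) (y : V)

open Fin.NatCast Fin.CommRing

private lemma walk_len_two_mid {V : Type*} {G : SimpleGraph V} {x y : V}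
    (p : G.Walk x y) (hp : p.length = 2) : ∃ w, G.Adj x w ∧ G.Adj w y := by
  cases p with
  | nil => simp at hp
  | cons h q =>
    cases q with
    | nil => simp at hp
    | cons h' q' =>
      cases q' with
      | nil => exact ⟨_, h, h'⟩
      | cons h'' q'' => simp [Nat.succ_eq_add_one] at hp

private lemma fin_cast_ne_zero (m k : ℕ) (h1 : 0 < k) (h2 : k < m + 5) :
    ((k : ℕ) : Fin (m + 5)) ≠ 0 := by
  intro h
  have := Fin.val_cast_of_lt (n := m + 5) (a := k) h2
  rw [h] at this
  simp at this
  omega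

theorem stmt_14 (n : ℕ) (hn : 5 ≤ n) :
    IsDistanceCritical (SimpleGraph.cycleGraph n) := by
  obtain ⟨m, rfl⟩ : ∃ m, n = m + 5 := ⟨n - 5, by omega⟩
  intro v
  have h2' : (2 : Fin (m+5)) ≠ 0 := by
    simpa using fin_cast_ne_zero m 2 (by omega) (by omega)
  have h3' : (3 : Fin (m+5)) ≠ 0 := by
    simpa using fin_cast_ne_zero m 3 (by omega) (by omega)
  have h4' : (4 : Fin (m+5)) ≠ 0 := by
    simpa using fin_cast_ne_zero m 4 (by omega) (by omega)
  have hone : (1 : Fin (m+5)) ≠ 0 := one_ne_zero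
  have veq : ∀ a : Fin (m+5), a.val = 1 → a = 1 := by
    intro a h
    have h1 : (1 : Fin (m+5)).val = 1 := by
      simpa using Fin.val_cast_of_lt (n := m + 5) (a := 1) (by omega)
    exact Fin.ext (by rw [h, h1])
  have hx : v - 1 ∈ ({v}ᶜ : Set (Fin (m+5))) := by
    simp only [Set.mem_compl_iff, Set.mem_singleton_iff]
    intro h
    exact hone (by linear_combination -h)
  have hy : v + 1 ∈ ({v}ᶜ : Set (Fin (m+5))) := by
    simp only [Set.mem_compl_iff, Set.mem_singleton_iff]
    intro h
    exact hone (by linear_combination h)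
  refine ⟨⟨v - 1, hx⟩, ⟨v + 1, hy⟩, ?_⟩
  -- distance in the full cycle is at most 2
  have hA1 : (SimpleGraph.cycleGraph (m+5)).Adj (v - 1) v := by
    rw [SimpleGraph.cycleGraph_adj']
    right
    have : v - (v - 1) = 1 := by ring
    rw [this]
    simpa using Fin.val_cast_of_lt (n := m + 5) (a := 1) (by omega)
  have hA2 : (SimpleGraph.cycleGraph (m+5)).Adj v (v + 1) := by
    rw [SimpleGraph.cycleGraph_adj']
    right
    have : v + 1 - v = 1 := by ring
    rw [this]
    simpa using Fin.val_cast_of_lt (n := m + 5) (a := 1) (by omega)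
  have hG : (SimpleGraph.cycleGraph (m+5)).edist (v - 1) (v + 1) ≤ 2 := by
    have := SimpleGraph.edist_le (SimpleGraph.Walk.cons hA1 hA2.toWalk)
    simpa using this
  -- distance in the vertex-deleted graph is more than 2
  set G' := (SimpleGraph.cycleGraph (m+5)).induce ({v}ᶜ : Set (Fin (m+5))) with hG'
  have hI : 2 < G'.edist ⟨v - 1, hx⟩ ⟨v + 1, hy⟩ := by
    by_contra hcon
    push_neg at hcon
    have hne : G'.edist ⟨v - 1, hx⟩ ⟨v + 1, hy⟩ ≠ ⊤ := by
      intro h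
      rw [h] at hcon
      simp [top_le_iff] at hcon
    obtain ⟨k, hk⟩ : ∃ k : ℕ, G'.edist ⟨v - 1, hx⟩ ⟨v + 1, hy⟩ = (k : ℕ∞) := by
      lift G'.edist ⟨v - 1, hx⟩ ⟨v + 1, hy⟩ to ℕ using hne with k hk
      exact ⟨k, rfl⟩
    have hkle : k ≤ 2 := by
      rw [hk] at hcon
      exact_mod_cast hcon
    obtain ⟨p, hp⟩ := SimpleGraph.exists_walk_of_edist_eq_coe hk
    interval_cases k
    · -- length-0 walk: v - 1 = v + 1
      have := SimpleGraph.Walk.eq_of_length_eq_zero hp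
      have h : v - 1 = v + 1 := congrArg Subtype.val this
      exact h2' (by linear_combination -h)
    · -- length-1 walk: adjacency
      have hadj : G'.Adj ⟨v - 1, hx⟩ ⟨v + 1, hy⟩ := by
        rw [← SimpleGraph.edist_eq_one_iff_adj, hk]
        norm_num
      have : (SimpleGraph.cycleGraph (m+5)).Adj (v - 1) (v + 1) := hadj
      rw [SimpleGraph.cycleGraph_adj'] at this
      rcases this with h | h
      · have h := veq _ h
        exact h3' (by linear_combination -h)
      · have h := veq _ h
        exact hone (by linear_combination h)
    · -- length-2 walk: common neighbour
      obtain ⟨w, hw1, hw2⟩ := walk_len_two_mid p hp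
      have hwv : (w : Fin (m+5)) ≠ v := w.2
      have hc1 : (SimpleGraph.cycleGraph (m+5)).Adj (v - 1) (w : Fin (m+5)) := hw1
      have hc2 : (SimpleGraph.cycleGraph (m+5)).Adj (w : Fin (m+5)) (v + 1) := hw2
      rw [SimpleGraph.cycleGraph_adj'] at hc1 hc2
      have hw' : (w : Fin (m+5)) = v - 2 := by
        rcases hc1 with h | h
        · linear_combination -(veq _ h)
        · exact absurd (by linear_combination veq _ h) hwv
      have hw'' : (w : Fin (m+5)) = v + 2 := by
        rcases hc2 with h | h
        · linear_combination veq _ h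
        · exact absurd (by linear_combination -(veq _ h)) hwv
      exact h4' (by linear_combination hw' - hw'')
  intro heq
  rw [heq] at hI
  exact absurd hG hI.not_ge
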